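/- Every vector of the form h_{kl} + c₁a_{kk} + c₂a_{kl} + c₃a_{lk} + c₄a_{ll} with c_i ∈ ℤ_{≥0} is a hole: it lies in Q_sat but not in Q(A). -/

import Mathlib

open Finset

/-- The column `a_{ij}` of the CDEM matrix: 1 in coordinate `j`, 1 in coordinate
`d + i`, 1 in coordinate `2d` (the last one) iff `i = j`, and 0 elsewhere
(coordinates are 0-based). -/
def acol (d : ℕ) (i j : Fin d) : Fin (2 * d + 1) → ℤ := fun t =>
  (if (t : ℕ) = (j : ℕ) then 1 else 0) +
  (if (t : ℕ) = d + (i : ℕ) then 1 else 0) +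
  (if (t : ℕ) = 2 * d ∧ i = j then 1 else 0)

/-- The vector `h_{kl} = (a_{ll} + a_{lk} + a_{kl} + a_{kk}) / 2`. -/
def hvec (d : ℕ) (k l : Fin d) : Fin (2 * d + 1) → ℤ := fun t =>
  (acol d l l t + acol d l k t + acol d k l t + acol d k k t) / 2

/-- The CDEM semigroup: nonnegative integer combinations of the columns. -/
def cdemQ (d : ℕ) : Set (Fin (2 * d + 1) → ℤ) :=
  {b | ∃ x : Fin d → Fin d → ℕ, b = fun t => ∑ i, ∑ j, (x i j : ℤ) * acol d i j t}

/-- The real cone `K(A)` generated by the CDEM columns. -/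
def cdemCone (d : ℕ) (v : Fin (2 * d + 1) → ℝ) : Prop :=
  ∃ x : Fin d → Fin d → ℝ, (∀ i j, 0 ≤ x i j) ∧
    v = fun t => ∑ i, ∑ j, x i j * (acol d i j t : ℝ)

/-- The saturation `Q_sat = K(A) ∩ ℤ^{2d+1}` of the CDEM semigroup. -/
def cdemQsat (d : ℕ) : Set (Fin (2 * d + 1) → ℤ) :=
  {b | cdemCone d fun t => (b t : ℝ)}

/-- The `i`-th coordinate (0-based, `i < d`) as an index into `Fin (2d+1)`. -/
def idx1 (d : ℕ) (i : Fin d) : Fin (2 * d + 1) := ⟨(i : ℕ), by have := i.isLt; omega⟩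

/-- The `(d+i)`-th coordinate as an index into `Fin (2d+1)`. -/
def idx2 (d : ℕ) (i : Fin d) : Fin (2 * d + 1) := ⟨d + (i : ℕ), by have := i.isLt; omega⟩

lemma acol_sum_eq (d : ℕ) (k l : Fin d) (hkl : k ≠ l) (t : Fin (2*d+1)) :
    acol d l l t + acol d l k t + acol d k l t + acol d k k t =
    2 * ((if (t : ℕ) = (k : ℕ) then 1 else 0) + (if (t : ℕ) = (l : ℕ) then 1 else 0) +
      (if (t : ℕ) = d + (k : ℕ) then 1 else 0) + (if (t : ℕ) = d + (l : ℕ) then 1 else 0) +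
      (if (t : ℕ) = 2 * d then 1 else 0)) := by
  simp [acol, hkl, Ne.symm hkl]
  ring

lemma hvec_eq (d : ℕ) (k l : Fin d) (hkl : k ≠ l) (t : Fin (2*d+1)) :
    hvec d k l t =
    (if (t : ℕ) = (k : ℕ) then 1 else 0) + (if (t : ℕ) = (l : ℕ) then 1 else 0) +
      (if (t : ℕ) = d + (k : ℕ) then 1 else 0) + (if (t : ℕ) = d + (l : ℕ) then 1 else 0) +
      (if (t : ℕ) = 2 * d then 1 else 0) := by
  unfold hvec
  rw [acol_sum_eq d k l hkl t, Int.mul_ediv_cancel_left _ two_ne_zero]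

lemma sum4 {R : Type*} [CommRing R] (d : ℕ) (k l : Fin d)
    (v₁ v₂ v₃ v₄ : R) (A : Fin d → Fin d → R) :
    ∑ i, ∑ j, ((if i = k ∧ j = k then v₁ else 0) + (if i = k ∧ j = l then v₂ else 0) +
      (if i = l ∧ j = k then v₃ else 0) + (if i = l ∧ j = l then v₄ else 0)) * A i j
    = v₁ * A k k + v₂ * A k l + v₃ * A l k + v₄ * A l l := by
  simp [add_mul, ite_mul, zero_mul, Finset.sum_add_distrib, ite_and,
    Finset.sum_ite_eq, Finset.sum_ite_eq']

lemma acol_idx1 (d : ℕ) (i j m : Fin d) :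
    acol d i j (idx1 d m) = if (m : ℕ) = (j : ℕ) then 1 else 0 := by
  have h1 : ¬ ((m : ℕ) = d + (i : ℕ)) := by have := m.isLt; omega
  have h2 : ¬ ((m : ℕ) = 2 * d) := by have := m.isLt; omega
  simp [acol, idx1, h1, h2]
  split_ifs <;> omega

lemma acol_idx2 (d : ℕ) (i j m : Fin d) :
    acol d i j (idx2 d m) = if (i : ℕ) = (m : ℕ) then 1 else 0 := by
  have h1 : ¬ (d + (m : ℕ) = (j : ℕ)) := by have := j.isLt; omega
  have h2 : ¬ (d + (m : ℕ) = 2 * d) := by have := m.isLt; omega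
  have h3 : (d + (m : ℕ) = d + (i : ℕ)) ↔ ((i : ℕ) = (m : ℕ)) := by omega
  simp [acol, idx2, h1, h2, h3]
  split_ifs <;> omega

lemma acol_last (d : ℕ) (i j : Fin d) :
    acol d i j ⟨2 * d, by omega⟩ = if i = j then 1 else 0 := by
  have h1 : ¬ ((2 * d : ℕ) = (j : ℕ)) := by have := j.isLt; omega
  have h2 : ¬ ((2 * d : ℕ) = d + (i : ℕ)) := by have := i.isLt; omega
  simp [acol, h1, h2]

lemma hvec_idx1 (d : ℕ) (k l m : Fin d) (hkl : k ≠ l) :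
    hvec d k l (idx1 d m) =
      (if (m : ℕ) = (k : ℕ) then 1 else 0) + (if (m : ℕ) = (l : ℕ) then 1 else 0) := by
  rw [hvec_eq d k l hkl]
  have hm := m.isLt
  have hk := k.isLt
  have hl := l.isLt
  simp only [idx1]
  split_ifs <;> omega

lemma hvec_idx2 (d : ℕ) (k l m : Fin d) (hkl : k ≠ l) :
    hvec d k l (idx2 d m) =
      (if (m : ℕ) = (k : ℕ) then 1 else 0) + (if (m : ℕ) = (l : ℕ) then 1 else 0) := by
  rw [hvec_eq d k l hkl]
  have hm := m.isLt
  have hk := k.isLt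
  have hl := l.isLt
  simp only [idx2]
  split_ifs <;> omega

lemma hvec_last (d : ℕ) (k l : Fin d) (hkl : k ≠ l) :
    hvec d k l ⟨2 * d, by omega⟩ = 1 := by
  rw [hvec_eq d k l hkl]
  have hk := k.isLt
  have hl := l.isLt
  rw [show ((⟨2 * d, by omega⟩ : Fin (2 * d + 1)) : ℕ) = 2 * d from rfl,
    if_neg (show ¬(2 * d = (k:ℕ)) by omega), if_neg (show ¬(2 * d = (l:ℕ)) by omega),
    if_neg (show ¬(2 * d = d + (k:ℕ)) by omega),
    if_neg (show ¬(2 * d = d + (l:ℕ)) by omega), if_pos rfl]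
  norm_num

lemma rhs_idx1 (d : ℕ) (x : Fin d → Fin d → ℕ) (m : Fin d) :
    ∑ i, ∑ j, (x i j : ℤ) * acol d i j (idx1 d m) = ∑ i, (x i m : ℤ) := by
  simp [acol_idx1, mul_ite, eq_comm (a := (m:ℕ)), Fin.val_inj, Finset.sum_ite_eq']

lemma rhs_idx2 (d : ℕ) (x : Fin d → Fin d → ℕ) (m : Fin d) :
    ∑ i, ∑ j, (x i j : ℤ) * acol d i j (idx2 d m) = ∑ j, (x m j : ℤ) := by
  simp [acol_idx2, mul_ite, Fin.val_inj, Finset.sum_ite_irrel, Finset.sum_ite_eq']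

lemma rhs_last (d : ℕ) (x : Fin d → Fin d → ℕ) :
    ∑ i, ∑ j, (x i j : ℤ) * acol d i j ⟨2 * d, by omega⟩ = ∑ i, (x i i : ℤ) := by
  simp [acol_last, mul_ite, Finset.sum_ite_eq]

/-- Every vector of the form `h_{kl} + c₁ a_{kk} + c₂ a_{kl} + c₃ a_{lk} + c₄ a_{ll}`
with nonnegative integer `cᵢ` is a hole: it lies in `Q_sat` but not in `Q(A)`. -/
theorem hvec_monoid_one_holes (d : ℕ) (hd : 2 ≤ d) (k l : Fin d) (hkl : k < l)
    (c₁ c₂ c₃ c₄ : ℕ) :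
    (fun t => hvec d k l t + (c₁ : ℤ) * acol d k k t + (c₂ : ℤ) * acol d k l t +
        (c₃ : ℤ) * acol d l k t + (c₄ : ℤ) * acol d l l t) ∈ cdemQsat d ∧
    (fun t => hvec d k l t + (c₁ : ℤ) * acol d k k t + (c₂ : ℤ) * acol d k l t +
        (c₃ : ℤ) * acol d l k t + (c₄ : ℤ) * acol d l l t) ∉ cdemQ d := by
  have hkl' : k ≠ l := ne_of_lt hkl
  have hklv : (k : ℕ) ≠ (l : ℕ) := fun h => hkl' (Fin.val_injective h)
  constructor
  · -- membership in Q_sat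
    refine ⟨fun i j => (if i = k ∧ j = k then (1/2 + c₁ : ℝ) else 0) +
      (if i = k ∧ j = l then (1/2 + c₂ : ℝ) else 0) +
      (if i = l ∧ j = k then (1/2 + c₃ : ℝ) else 0) +
      (if i = l ∧ j = l then (1/2 + c₄ : ℝ) else 0), ?_, ?_⟩
    · intro i j
      dsimp only
      have h1 : (0:ℝ) ≤ 1/2 + c₁ := by positivity
      have h2 : (0:ℝ) ≤ 1/2 + c₂ := by positivity
      have h3 : (0:ℝ) ≤ 1/2 + c₃ := by positivity
      have h4 : (0:ℝ) ≤ 1/2 + c₄ := by positivity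
      split_ifs <;> simp_all <;> linarith
    · funext t
      rw [sum4 d k l]
      have h2 : acol d l l t + acol d l k t + acol d k l t + acol d k k t
          = 2 * hvec d k l t := by
        rw [hvec_eq d k l hkl' t, acol_sum_eq d k l hkl' t]
      have h2r : (acol d l l t : ℝ) + acol d l k t + acol d k l t + acol d k k t
          = 2 * (hvec d k l t : ℝ) := by exact_mod_cast congrArg (Int.cast : ℤ → ℝ) h2
      push_cast
      linarith
  · -- not in Q
    rintro ⟨x, hx⟩
    have hfun := fun t => congrFun hx t
    have hk := k.isLt
    have hl := l.isLt
    -- rows i ∉ {k, l} are zero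
    have hrow : ∀ i : Fin d, i ≠ k → i ≠ l → ∀ j, x i j = 0 := by
      intro i hik hil j
      have h := hfun (idx2 d i)
      rw [hvec_idx2 d k l i hkl', rhs_idx2, acol_idx2, acol_idx2, acol_idx2, acol_idx2] at h
      have hiv : (i : ℕ) ≠ (k : ℕ) := fun h => hik (Fin.val_injective h)
      have hiv' : (i : ℕ) ≠ (l : ℕ) := fun h => hil (Fin.val_injective h)
      simp only [if_neg hiv, if_neg hiv', if_neg (Ne.symm hiv), if_neg (Ne.symm hiv'),
        mul_zero, add_zero, zero_add] at h
      have hsum : (∑ j, x i j : ℕ) = 0 := by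
        have : (0 : ℤ) = ∑ j, (x i j : ℤ) := by rw [← h]
        exact_mod_cast this.symm
      exact (Finset.sum_eq_zero_iff.mp hsum) j (Finset.mem_univ j)
    -- columns j ∉ {k, l} are zero
    have hcol : ∀ j : Fin d, j ≠ k → j ≠ l → ∀ i, x i j = 0 := by
      intro j hjk hjl i
      have h := hfun (idx1 d j)
      rw [hvec_idx1 d k l j hkl', rhs_idx1, acol_idx1, acol_idx1, acol_idx1, acol_idx1] at h
      have hjv : (j : ℕ) ≠ (k : ℕ) := fun h => hjk (Fin.val_injective h)
      have hjv' : (j : ℕ) ≠ (l : ℕ) := fun h => hjl (Fin.val_injective h)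
      simp only [if_neg hjv, if_neg hjv', mul_zero, add_zero, zero_add] at h
      have hsum : (∑ i, x i j : ℕ) = 0 := by
        have : (0 : ℤ) = ∑ i, (x i j : ℤ) := by rw [← h]
        exact_mod_cast this.symm
      exact (Finset.sum_eq_zero_iff.mp hsum) i (Finset.mem_univ i)
    have sumred : ∀ f : Fin d → ℤ, (∀ i, i ≠ k → i ≠ l → f i = 0) →
        ∑ i, f i = f k + f l := by
      intro f hf
      rw [← Finset.sum_subset (Finset.subset_univ {k, l})
        (fun i _ hi => by
          simp only [Finset.mem_insert, Finset.mem_singleton, not_or] at hi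
          exact hf i hi.1 hi.2)]
      exact Finset.sum_pair hkl'
    -- equation at coordinate k
    have E1 := hfun (idx1 d k)
    rw [hvec_idx1 d k l k hkl', rhs_idx1, acol_idx1, acol_idx1, acol_idx1, acol_idx1] at E1
    rw [sumred _ (fun i hik hil => by rw [hrow i hik hil k, Nat.cast_zero])] at E1
    simp [hklv, Ne.symm hklv] at E1
    -- equation at coordinate d + l
    have E2 := hfun (idx2 d l)
    rw [hvec_idx2 d k l l hkl', rhs_idx2, acol_idx2, acol_idx2, acol_idx2, acol_idx2] at E2
    rw [sumred _ (fun j hjk hjl => by rw [hcol j hjk hjl l, Nat.cast_zero])] at E2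
    simp [hklv, Ne.symm hklv] at E2
    -- equation at last coordinate
    have E3 := hfun ⟨2 * d, by omega⟩
    rw [hvec_last d k l hkl', rhs_last, acol_last, acol_last, acol_last, acol_last] at E3
    rw [sumred _ (fun i hik hil => by rw [hrow i hik hil i, Nat.cast_zero])] at E3
    simp [hkl', Ne.symm hkl'] at E3
    omega
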